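/- Suppose C*(X,Y,Z,W) = 0 for all X,Y,Z,W ∈ V with a ≠ 0, and suppose r ≠ 0. Let T be a nonzero linear functional on V with Riesz vector ρ (T(X) = g(X,ρ)) such that T(Z)S(X,U) − T(U)S(X,Z) = 0 for all X,Z,U ∈ V and T(QX) = r T(X) for all X ∈ V. Then T(ρ) ≠ 0 and the Ricci tensor satisfies S(X,Z) = (r/T(ρ)) T(X) T(Z) for all X,Z ∈ V; in particular, S is of the quasi-Einstein form S = p g + q T⊗T with p = 0 and q = r/T(ρ) ≠ 0. (This is the pointwise content of: a quasi-conformally flat weakly Ricci symmetric manifold of dimension n > 3 with non-vanishing scalar curvature is a quasi-Einstein manifold with respect to the 1-form T.) -/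

import Mathlib

open scoped RealInnerProductSpace

theorem stmt9
    {V : Type*} [NormedAddCommGroup V] [InnerProductSpace ℝ V]
    (n : ℕ) (hn : 3 < n)
    (e : Module.Basis (Fin n) ℝ V) (he : Orthonormal ℝ e)
    (Rb : V → V → V → V → ℝ)
    (hlin1 : ∀ (c : ℝ) (X X' Y Z W : V),
      Rb (c • X + X') Y Z W = c * Rb X Y Z W + Rb X' Y Z W)
    (hlin2 : ∀ (c : ℝ) (X Y Y' Z W : V),
      Rb X (c • Y + Y') Z W = c * Rb X Y Z W + Rb X Y' Z W)
    (hlin3 : ∀ (c : ℝ) (X Y Z Z' W : V),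
      Rb X Y (c • Z + Z') W = c * Rb X Y Z W + Rb X Y Z' W)
    (hlin4 : ∀ (c : ℝ) (X Y Z W W' : V),
      Rb X Y Z (c • W + W') = c * Rb X Y Z W + Rb X Y Z W')
    (hskew1 : ∀ X Y Z W : V, Rb X Y Z W = - Rb Y X Z W)
    (hskew2 : ∀ X Y Z W : V, Rb X Y Z W = - Rb X Y W Z)
    (hpair : ∀ X Y Z W : V, Rb X Y Z W = Rb Z W X Y)
    (S : V → V → ℝ) (hS : ∀ Y Z : V, S Y Z = ∑ i, Rb (e i) Y Z (e i))
    (r : ℝ) (hr : r = ∑ i, S (e i) (e i))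
    (a b : ℝ)
    (Cs : V → V → V → V → ℝ)
    (hC : ∀ X Y Z W : V, Cs X Y Z W =
      a * Rb X Y Z W
      + b * (S Y Z * ⟪X, W⟫ - S X Z * ⟪Y, W⟫
             + ⟪Y, Z⟫ * S X W - ⟪X, Z⟫ * S Y W)
      - (r / n) * (a / ((n : ℝ) - 1) + 2 * b)
        * (⟪Y, Z⟫ * ⟪X, W⟫ - ⟪X, Z⟫ * ⟪Y, W⟫))
    (ha : a ≠ 0)
    (hflat : ∀ X Y Z W : V, Cs X Y Z W = 0)
    (hrne : r ≠ 0)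
    (Q : V →ₗ[ℝ] V) (hQ : ∀ X Y : V, ⟪Q X, Y⟫ = S X Y)
    (T : V →ₗ[ℝ] ℝ) (hT : T ≠ 0) (ρ : V) (hρ : ∀ X : V, T X = ⟪X, ρ⟫)
    (hTS : ∀ X Z U : V, T Z * S X U - T U * S X Z = 0)
    (hTQ : ∀ X : V, T (Q X) = r * T X)
 :
    T ρ ≠ 0 ∧ (∀ X Z : V, S X Z = (r / T ρ) * T X * T Z) ∧ r / T ρ ≠ 0 := by
  obtain ⟨z, hz⟩ : ∃ z, T z ≠ 0 := by
    by_contra h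
    push_neg at h
    exact hT (LinearMap.ext fun x => by simp [h x])
  -- key: S X U = (S X z / T z) * T U
  have key : ∀ X U : V, S X U = (S X z / T z) * T U := by
    intro X U
    have h := hTS X z U
    field_simp
    linarith
  have hSρ : ∀ X : V, S X ρ = r * T X := by
    intro X
    have := hQ X ρ
    rw [← hρ (Q X)] at this
    rw [← this, hTQ]
  have hTρ : T ρ ≠ 0 := by
    intro h0
    have := hSρ z
    rw [key z ρ, h0, mul_zero] at this
    exact hrne (by
      have : r * T z = 0 := this.symm
      rcases mul_eq_zero.mp this with h | h
      · exact h
      · exact absurd h hz)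
  refine ⟨hTρ, fun X Z => ?_, div_ne_zero hrne hTρ⟩
  have hc : S X z / T z = r * T X / T ρ := by
    have h1 := hSρ X
    rw [key X ρ] at h1
    field_simp at h1 ⊢
    linear_combination h1
  rw [key X Z, hc]
  field_simp
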